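/- Let M be an n×n matrix over K = 𝔽_{q^n} such that the matrices M^{[σ⁰]}, M^{[σ¹]}, …, M^{[σ^{n−1}]} are linearly independent over K. Then for every nonzero tuple c = (c₀,…,c_{n−1}) ∈ Kⁿ, the 𝔽_q-linear map x ↦ Σ_{i=0}^{n−1} cᵢ x^{qⁱ} is a bijection of K if and only if there do NOT exist z₁,…,z_{n−1} ∈ K such that Σ_{i=0}^{n−1} cᵢ · M^{[σⁱ]} lies in the K-linear span of {D_{z₁}(M), …, D_{z_{n−1}}(M)}. -/

import Mathlib

set_option maxHeartbeats 2000000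
set_option synthInstance.maxHeartbeats 1000000

/-- The σ-twist of a matrix: `(M^[σ])_{i,j} = (M_{i-1,j-1})^q` (indices mod `n`). -/
def sigmaTwist (q : ℕ) {n : ℕ} {K : Type*} [Field K]
    (M : Matrix (ZMod n) (ZMod n) K) : Matrix (ZMod n) (ZMod n) K :=
  Matrix.of fun i j => (M (i - 1) (j - 1)) ^ q

/-- The contraction `D_z(M) = ∑_{j<n} z^{q^j} • M^{[σ^j]}`. -/
def contractionD (q n : ℕ) {K : Type*} [Field K] (z : K)
    (M : Matrix (ZMod n) (ZMod n) K) : Matrix (ZMod n) (ZMod n) K :=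
  ∑ j ∈ Finset.range n, z ^ q ^ j • (sigmaTwist q)^[j] M

open Polynomial in
private lemma aux_coeffs_eq_zero {q n : ℕ} {K : Type*} [Field K] [Fintype K]
    (hq2 : 2 ≤ q) (hK : Fintype.card K = q ^ n)
    (a : Fin n → K) (h : ∀ x : K, ∑ i : Fin n, a i * x ^ q ^ (i : ℕ) = 0) :
    ∀ i, a i = 0 := by
  classical
  rcases Nat.eq_zero_or_pos n with rfl | hn
  · exact fun i => i.elim0
  set P : K[X] := ∑ i : Fin n, C (a i) * X ^ (q ^ (i : ℕ)) with hP
  have heval : ∀ x : K, P.eval x = 0 := by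
    intro x
    rw [hP, Polynomial.eval_finset_sum]
    simpa using h x
  have hdeg : P.natDegree < Fintype.card K := by
    rw [hK, hP]
    have h1 : (∑ i : Fin n, C (a i) * X ^ (q ^ (i : ℕ))).natDegree ≤ q ^ (n - 1) := by
      apply Polynomial.natDegree_sum_le_of_forall_le
      intro i _
      refine (Polynomial.natDegree_C_mul_X_pow_le _ _).trans
        (Nat.pow_le_pow_right (by omega) ?_)
      have := i.isLt
      omega
    exact lt_of_le_of_lt h1 (Nat.pow_lt_pow_right (by omega) (by omega))
  have hP0 : P = 0 :=
    Polynomial.eq_zero_of_natDegree_lt_card_of_eval_eq_zero P Function.injective_id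
      (fun x => heval x) (by simpa using hdeg)
  intro i
  have hco : P.coeff (q ^ (i : ℕ)) = a i := by
    rw [hP, Polynomial.finset_sum_coeff]
    rw [Finset.sum_eq_single i]
    · simp
    · intro j _ hj
      rw [Polynomial.coeff_C_mul, Polynomial.coeff_X_pow, if_neg, mul_zero]
      exact fun hh => hj (Fin.ext (Nat.pow_right_injective hq2 hh.symm))
    · simp
  rw [← hco, hP0, Polynomial.coeff_zero]

open Polynomial in
private lemma aux_key {q n p k : ℕ} {K : Type*} [Field K] [Fintype K] [CharP K p]
    (hp : p.Prime) (hk : 0 < k) (hqpk : q = p ^ k) (hn : 0 < n)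
    (hK : Fintype.card K = q ^ n) (c : Fin n → K) :
    (¬ Function.Injective fun x : K => ∑ i : Fin n, c i * x ^ q ^ (i : ℕ)) ↔
      ∃ z lam : Fin (n - 1) → K,
        ∀ i : Fin n, c i = ∑ j : Fin (n - 1), lam j * z j ^ q ^ (i : ℕ) := by
  classical
  haveI : ExpChar K p := .prime hp
  have hq2 : 2 ≤ q := by
    rw [hqpk]
    calc 2 = 2 ^ 1 := rfl
    _ ≤ p ^ k := Nat.pow_le_pow_left hp.two_le k |>.trans' (by
            exact Nat.pow_le_pow_right (by omega) hk)
  -- the q-power Frobenius facts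
  have hqpow : ∀ (i : ℕ) (x : K), (iterateFrobenius K p (k * i)) x = x ^ q ^ i := by
    intro i x; rw [iterateFrobenius_def, hqpk, ← pow_mul]
  have hadd : ∀ (i : ℕ) (x y : K), (x + y) ^ q ^ i = x ^ q ^ i + y ^ q ^ i := by
    intro i x y; rw [← hqpow, ← hqpow, ← hqpow, map_add]
  have hsub : ∀ (i : ℕ) (x y : K), (x - y) ^ q ^ i = x ^ q ^ i - y ^ q ^ i := by
    intro i x y; rw [← hqpow, ← hqpow, ← hqpow, map_sub]
  have hpow_qn : ∀ x : K, x ^ q ^ n = x := by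
    intro x; rw [← hK]; exact FiniteField.pow_card x
  -- the subfield with q elements
  set φ : K →+* K := iterateFrobenius K p k with hφdef
  have hφ : ∀ x : K, φ x = x ^ q := by
    intro x; rw [hφdef, iterateFrobenius_def, hqpk]
  let F : Subfield K :=
    { toSubring := RingHom.eqLocus φ (RingHom.id K)
      inv_mem' := fun x hx => by
        have hx' : φ x = x := hx
        show φ x⁻¹ = RingHom.id K x⁻¹
        rw [map_inv₀, hx']; rfl }
  have hmemF : ∀ x : K, x ∈ F ↔ x ^ q = x := by
    intro x
    constructor
    · intro hx; have hx' : φ x = x := hx; rwa [hφ] at hx'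
    · intro hx; show φ x = RingHom.id K x; rw [hφ]; exact hx
  have hFpow : ∀ r : K, r ^ q = r → ∀ i : ℕ, r ^ q ^ i = r := by
    intro r hr i
    induction i with
    | zero => simp
    | succ m ih => rw [pow_succ, pow_mul, ih, hr]
  haveI : Fintype F := Fintype.ofFinite F
  -- cardinality of F
  have hq1n : 1 < q ^ n := by
    calc 1 < q := by omega
    _ = q ^ 1 := (pow_one q).symm
    _ ≤ q ^ n := Nat.pow_le_pow_right (by omega) hn
  have hcardF : Fintype.card F = q := by
    have hsep : (X ^ q - X : K[X]).Separable :=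
      galois_poly_separable p q (by rw [hqpk]; exact dvd_pow_self p hk.ne')
    have hne : (X ^ (q ^ n) - X : K[X]) ≠ 0 := by
      have := FiniteField.X_pow_card_pow_sub_X_ne_zero (K' := K) (n := n) (p := q) hn.ne' (by omega)
      exact this
    have hne2 : (X ^ q - X : K[X]) ≠ 0 := by
      have h1 : (X ^ q - X : K[X]).natDegree = q :=
        FiniteField.X_pow_card_sub_X_natDegree_eq K (by omega)
      intro h0
      rw [h0] at h1
      simp at h1
      omega
    have hsplits_big : Splits (X ^ (q ^ n) - X : K[X]) := by
      rw [Polynomial.splits_iff_card_roots]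
      rw [← hK, FiniteField.roots_X_pow_card_sub_X K, hK,
        FiniteField.X_pow_card_sub_X_natDegree_eq K hq1n]
      simp [← hK]
    have hdvd : (X ^ q - X : K[X]) ∣ (X ^ (q ^ n) - X) := by
      have hfac : ∀ m : ℕ, 0 < m → (X ^ m - X : K[X]) = X * (X ^ (m - 1) - 1) := by
        intro m hm
        rw [mul_sub, mul_one, ← pow_succ', Nat.sub_add_cancel hm]
      obtain ⟨e, he⟩ : (q - 1) ∣ (q ^ n - 1) := by
        simpa using Nat.sub_dvd_pow_sub_pow q 1 n
      have h1 : (X ^ (q - 1) - 1 : K[X]) ∣ (X ^ (q ^ n - 1) - 1) := by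
        rw [he, pow_mul]
        exact sub_one_dvd_pow_sub_one _ _
      rw [hfac q (by omega), hfac (q ^ n) (by omega)]
      exact mul_dvd_mul_left X h1
    have hsplits : Splits (X ^ q - X : K[X]) :=
      Polynomial.Splits.of_dvd hsplits_big hne hdvd
    have hcard2 : Fintype.card ((X ^ q - X : K[X]).rootSet K) = q := by
      rw [Polynomial.card_rootSet_eq_natDegree hsep
        (by rw [Algebra.algebraMap_self, Polynomial.map_id]; exact hsplits)]
      exact FiniteField.X_pow_card_sub_X_natDegree_eq K (by omega)
    have hFeq : ∀ x : K, x ∈ F ↔ x ∈ (X ^ q - X : K[X]).rootSet K := by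
      intro x
      rw [hmemF, Polynomial.mem_rootSet]
      constructor
      · intro hx
        refine ⟨hne2, ?_⟩
        simp [sub_eq_zero, hx]
      · intro ⟨_, hx⟩
        simp only [map_sub, map_pow, aeval_X] at hx
        rwa [sub_eq_zero] at hx
    rw [← hcard2]
    exact Fintype.card_congr (Equiv.subtypeEquivRight hFeq)
  haveI : Module.Finite F K := Module.Finite.of_finite
  have hrank : Module.finrank F K = n := by
    have := Module.card_eq_pow_finrank (K := F) (V := K)
    rw [hcardF, hK] at this
    exact (Nat.pow_right_injective hq2 this.symm)
  have hsmul : ∀ (r : F) (x : K), r • x = (r : K) * x := fun r x => rfl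
  -- the trace-like map
  set T : K → K := fun x => ∑ i : Fin n, x ^ q ^ (i : ℕ) with hT
  have hTadd : ∀ x y : K, T (x + y) = T x + T y := by
    intro x y
    rw [hT]
    simp only
    rw [← Finset.sum_add_distrib]
    exact Finset.sum_congr rfl fun i _ => hadd _ _ _
  have hshift : ∀ x : K, ∑ i : Fin n, x ^ q ^ ((i : ℕ) + 1) = T x := by
    intro x
    have h1 := Finset.sum_range_succ' (fun i => x ^ q ^ i) n
    have h2 := Finset.sum_range_succ (fun i => x ^ q ^ i) n
    have h3 : x ^ q ^ n = x ^ q ^ 0 := by rw [hpow_qn, pow_zero, pow_one]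
    rw [Fin.sum_univ_eq_sum_range (fun i => x ^ q ^ (i + 1)) n, hT]
    simp only
    rw [Fin.sum_univ_eq_sum_range (fun i => x ^ q ^ i) n]
    have h4 := h1.symm.trans h2
    rw [h3] at h4
    exact add_right_cancel h4
  have hTpow : ∀ x : K, (T x) ^ q = T x := by
    intro x
    have h5 : (T x) ^ q = ∑ i : Fin n, x ^ q ^ ((i : ℕ) + 1) := by
      rw [← hφ, hT]
      simp only [map_sum]
      refine Finset.sum_congr rfl fun i _ => ?_
      rw [hφ, ← pow_mul, ← pow_succ]
    rw [h5, hshift]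
  have hTmul : ∀ (r : F) (x : K), T ((r : K) * x) = (r : K) * T x := by
    intro r x
    have hr : (r : K) ^ q = r := (hmemF _).mp r.2
    rw [hT]
    simp only
    rw [Finset.mul_sum]
    refine Finset.sum_congr rfl fun i _ => ?_
    rw [mul_pow, hFpow _ hr]
  -- T as a linear functional into F
  let Tl : K →ₗ[F] F :=
    { toFun := fun x => ⟨T x, (hmemF _).mpr (hTpow x)⟩
      map_add' := fun x y => Subtype.ext (hTadd x y)
      map_smul' := fun r x => Subtype.ext (by
        show T (r • x) = ((r • (⟨T x, (hmemF _).mpr (hTpow x)⟩ : F) : F) : K)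
        rw [hsmul, hTmul]
        rfl) }
  have hTl : ∀ x : K, (Tl x : K) = T x := fun x => rfl
  let Dm : K →ₗ[F] Module.Dual F K :=
    { toFun := fun z => Tl ∘ₗ LinearMap.mulLeft F z
      map_add' := fun z1 z2 => LinearMap.ext fun x => by
        simp only [LinearMap.comp_apply, LinearMap.mulLeft_apply, LinearMap.add_apply]
        rw [add_mul, map_add]
      map_smul' := fun r z => LinearMap.ext fun x => by
        simp only [LinearMap.comp_apply, LinearMap.mulLeft_apply, RingHom.id_apply,
          LinearMap.smul_apply]
        rw [smul_mul_assoc, map_smul] }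
  have hDm : ∀ z x : K, ((Dm z) x : K) = T (z * x) := fun z x => rfl
  have hDinj : Function.Injective Dm := by
    rw [← LinearMap.ker_eq_bot, LinearMap.ker_eq_bot']
    intro z hz
    have h0 : ∀ x : K, T (z * x) = 0 := by
      intro x
      have h1 : (Dm z) x = 0 := by rw [hz]; rfl
      have h2 := congrArg (Subtype.val) h1
      rwa [hDm] at h2
    have hcoef := aux_coeffs_eq_zero hq2 hK (fun i => z ^ q ^ (i : ℕ)) (fun x => by
      have h3 := h0 x
      rw [hT] at h3
      simp only at h3
      rw [← h3]
      exact Finset.sum_congr rfl fun i _ => (mul_pow z x _).symm)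
    have h4 := hcoef ⟨0, hn⟩
    simpa using h4
  have hDsurj : Function.Surjective Dm := by
    rw [← LinearMap.range_eq_top]
    apply (LinearMap.ker_eq_bot_iff_range_eq_top_of_finrank_eq_finrank ?_).mp
    · rw [LinearMap.ker_eq_bot]; exact hDinj
    · rw [Subspace.dual_finrank_eq]
  -- the linearized polynomial as F-linear map
  let Lc : K →ₗ[F] K :=
    { toFun := fun x => ∑ i : Fin n, c i * x ^ q ^ (i : ℕ)
      map_add' := fun x y => by
        rw [← Finset.sum_add_distrib]
        exact Finset.sum_congr rfl fun i _ => by rw [hadd, mul_add]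
      map_smul' := fun r x => by
        simp only [RingHom.id_apply]
        have hr : (r : K) ^ q = r := (hmemF _).mp r.2
        rw [hsmul, hsmul, Finset.mul_sum]
        refine Finset.sum_congr rfl fun i _ => ?_
        rw [mul_pow, hFpow _ hr]
        ring }
  constructor
  · -- not injective → exists representation
    intro hninj
    rw [Function.not_injective_iff] at hninj
    obtain ⟨a, b, hfab, hab⟩ := hninj
    set x₀ : K := a - b with hx₀def
    have hx₀ : x₀ ≠ 0 := sub_ne_zero.mpr hab
    have hLx₀ : Lc x₀ = 0 := by
      show ∑ i : Fin n, c i * (a - b) ^ q ^ (i : ℕ) = 0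
      have : ∀ i : Fin n, c i * (a - b) ^ q ^ (i : ℕ)
          = c i * a ^ q ^ (i : ℕ) - c i * b ^ q ^ (i : ℕ) := fun i => by
        rw [hsub, mul_sub]
      rw [Finset.sum_congr rfl fun i _ => this i, Finset.sum_sub_distrib]
      rw [sub_eq_zero]
      exact hfab
    have hker : x₀ ∈ LinearMap.ker Lc := LinearMap.mem_ker.mpr hLx₀
    have hr : Module.finrank F (LinearMap.range Lc) ≤ n - 1 := by
      have h1 := LinearMap.finrank_range_add_finrank_ker Lc
      rw [hrank] at h1
      have h2 : 0 < Module.finrank F (LinearMap.ker Lc) := by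
        rw [Module.finrank_pos_iff]
        exact nontrivial_of_ne ⟨x₀, hker⟩ 0 (fun hcon =>
          hx₀ (by simpa [Subtype.ext_iff] using hcon))
      omega
    set r := Module.finrank F (LinearMap.range Lc) with hrdef
    let bb : Module.Basis (Fin r) F (LinearMap.range Lc) := Module.finBasis F _
    choose zc hzcspec using fun j : Fin r => hDsurj ((bb.coord j) ∘ₗ Lc.rangeRestrict)
    have hbig : ∀ x : K, Lc x = ∑ j : Fin r, T (zc j * x) * (bb j : K) := by
      intro x
      have h1 := congrArg (Subtype.val) (bb.sum_repr (Lc.rangeRestrict x))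
      have h2 : ((Lc.rangeRestrict x : LinearMap.range Lc) : K) = Lc x := rfl
      rw [h2] at h1
      rw [← h1, Submodule.coe_sum]
      refine Finset.sum_congr rfl fun j _ => ?_
      have h3 := LinearMap.congr_fun (hzcspec j) x
      simp only [LinearMap.comp_apply, Module.Basis.coord_apply] at h3
      rw [← h3, Submodule.coe_smul, hsmul, hDm]
    have hexpand : ∀ x : K, Lc x
        = ∑ i : Fin n, (∑ j : Fin r, (bb j : K) * zc j ^ q ^ (i : ℕ)) * x ^ q ^ (i : ℕ) := by
      intro x
      rw [hbig x]
      have h5 : ∀ j : Fin r, T (zc j * x) * (bb j : K)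
          = ∑ i : Fin n, ((bb j : K) * zc j ^ q ^ (i : ℕ)) * x ^ q ^ (i : ℕ) := by
        intro j
        rw [hT]
        simp only
        rw [Finset.sum_mul]
        exact Finset.sum_congr rfl fun i _ => by rw [mul_pow]; ring
      rw [Finset.sum_congr rfl fun j _ => h5 j, Finset.sum_comm]
      exact Finset.sum_congr rfl fun i _ => by rw [Finset.sum_mul]
    have hC := aux_coeffs_eq_zero hq2 hK
      (fun i => c i - ∑ j : Fin r, (bb j : K) * zc j ^ q ^ (i : ℕ)) (fun x => by
        have h6 := hexpand x
        have h7 : Lc x = ∑ i : Fin n, c i * x ^ q ^ (i : ℕ) := rfl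
        rw [h7] at h6
        rw [Finset.sum_congr rfl fun i (_ : i ∈ Finset.univ) => sub_mul (c i)
          (∑ j : Fin r, (bb j : K) * zc j ^ q ^ (i : ℕ)) (x ^ q ^ (i : ℕ)),
          Finset.sum_sub_distrib, sub_eq_zero, ← h6])
    refine ⟨fun j => if h : (j : ℕ) < r then zc ⟨j, h⟩ else 0,
            fun j => if h : (j : ℕ) < r then (bb ⟨j, h⟩ : K) else 0, ?_⟩
    intro i
    have hci : c i = ∑ j : Fin r, (bb j : K) * zc j ^ q ^ (i : ℕ) := by
      have h8 := hC i
      rwa [sub_eq_zero] at h8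
    rw [hci]
    set G : ℕ → K := fun m => (if h : m < r then (bb ⟨m, h⟩ : K) else 0)
      * (if h : m < r then zc ⟨m, h⟩ else 0) ^ q ^ (i : ℕ) with hG
    have e1 : ∑ j : Fin (n - 1), (if h : (j : ℕ) < r then (bb ⟨j, h⟩ : K) else 0)
        * (if h : (j : ℕ) < r then zc ⟨j, h⟩ else 0) ^ q ^ (i : ℕ)
        = ∑ m ∈ Finset.range (n - 1), G m := Fin.sum_univ_eq_sum_range G (n - 1)
    have e2 : ∑ m ∈ Finset.range r, G m = ∑ m ∈ Finset.range (n - 1), G m := by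
      refine Finset.sum_subset (Finset.range_subset_range.mpr hr) fun m hm hnm => ?_
      have hmr : ¬ m < r := by simpa using hnm
      rw [hG]
      simp only [dif_neg hmr]
      rw [zero_mul]
    have e3 : ∑ m ∈ Finset.range r, G m
        = ∑ j : Fin r, (bb j : K) * zc j ^ q ^ (i : ℕ) := by
      rw [← Fin.sum_univ_eq_sum_range G r]
      refine Finset.sum_congr rfl fun j _ => ?_
      rw [hG]
      simp only [j.isLt, dif_pos, Fin.eta]
    rw [e1, ← e2, e3]
  · -- exists representation → not injective
    rintro ⟨z, lam, hcz⟩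
    set Φ : K →ₗ[F] (Fin (n - 1) → F) :=
      LinearMap.pi (fun j : Fin (n - 1) => Tl ∘ₗ LinearMap.mulLeft F (z j)) with hΦ
    have hΦnotinj : ¬ Function.Injective Φ := by
      intro hinj
      have h1 := LinearMap.finrank_le_finrank_of_injective hinj
      rw [hrank, Module.finrank_pi] at h1
      simp only [Fintype.card_fin] at h1
      omega
    have hkerΦ : LinearMap.ker Φ ≠ ⊥ := by
      rwa [ne_eq, LinearMap.ker_eq_bot]
    obtain ⟨x₀, hx₀mem, hx₀⟩ := Submodule.ne_bot_iff _ |>.mp hkerΦ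
    have hT0 : ∀ j : Fin (n - 1), T (z j * x₀) = 0 := by
      intro j
      have h2 : Φ x₀ = 0 := LinearMap.mem_ker.mp hx₀mem
      have h3 := congrFun h2 j
      have h4 : Φ x₀ j = Tl (z j * x₀) := rfl
      rw [h4] at h3
      exact congrArg Subtype.val h3
    intro hinj
    apply hx₀
    apply hinj
    show ∑ i : Fin n, c i * x₀ ^ q ^ (i : ℕ) = ∑ i : Fin n, c i * (0 : K) ^ q ^ (i : ℕ)
    have hzero : ∑ i : Fin n, c i * (0 : K) ^ q ^ (i : ℕ) = 0 := by
      refine Finset.sum_eq_zero fun i _ => ?_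
      rw [zero_pow (by positivity), mul_zero]
    rw [hzero]
    calc ∑ i : Fin n, c i * x₀ ^ q ^ (i : ℕ)
        = ∑ i : Fin n, ∑ j : Fin (n - 1), lam j * (z j * x₀) ^ q ^ (i : ℕ) := by
          refine Finset.sum_congr rfl fun i _ => ?_
          rw [hcz i, Finset.sum_mul]
          exact Finset.sum_congr rfl fun j _ => by rw [mul_pow]; ring
      _ = ∑ j : Fin (n - 1), lam j * T (z j * x₀) := by
          rw [Finset.sum_comm]
          refine Finset.sum_congr rfl fun j _ => ?_
          rw [hT]
          simp only
          rw [Finset.mul_sum]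
      _ = 0 := by
          refine Finset.sum_eq_zero fun j _ => ?_
          rw [hT0 j, mul_zero]

/-- If `M^{[σ⁰]}, …, M^{[σ^{n-1}]}` are `K`-linearly independent, then for a nonzero
tuple `c` the linearised polynomial `∑ cᵢ x^{qⁱ}` is bijective iff `∑ cᵢ • M^{[σⁱ]}` does
not lie in the `K`-span of `n-1` contractions `D_{z₁}(M), …, D_{z_{n-1}}(M)`. -/
theorem stmt2 (q n : ℕ) [NeZero n]
    (hq : ∃ p k : ℕ, p.Prime ∧ 0 < k ∧ q = p ^ k)
    (K : Type*) [Field K] [Fintype K] (hK : Fintype.card K = q ^ n)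
    (M : Matrix (ZMod n) (ZMod n) K)
    (hind : LinearIndependent K fun i : Fin n => (sigmaTwist q)^[(i : ℕ)] M)
    (c : Fin n → K) (hc : c ≠ 0) :
    Function.Bijective (fun x : K => ∑ i : Fin n, c i * x ^ q ^ (i : ℕ)) ↔
      ¬∃ z : Fin (n - 1) → K,
        (∑ i : Fin n, c i • (sigmaTwist q)^[(i : ℕ)] M) ∈
          Submodule.span K (Set.range fun j : Fin (n - 1) => contractionD q n (z j) M) := by
  classical
  obtain ⟨p, k, hp, hk, hqpk⟩ := hq
  have hn : 0 < n := Nat.pos_of_ne_zero (NeZero.ne n)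
  haveI : CharP K (ringChar K) := ringChar.charP K
  obtain ⟨m, hrp, hcard⟩ := FiniteField.card K (ringChar K)
  have hpr : p = ringChar K := by
    have hdvd : p ∣ (ringChar K) ^ (m : ℕ) := by
      rw [← hcard, hK, hqpk, ← pow_mul]
      exact dvd_pow_self p (by positivity)
    exact (Nat.prime_dvd_prime_iff_eq hp hrp).mp (hp.dvd_of_dvd_pow hdvd)
  haveI : CharP K p := hpr ▸ ringChar.charP K
  have hkey := aux_key (K := K) hp hk hqpk hn hK c
  rw [← Finite.injective_iff_bijective]
  have hmat : (∃ z : Fin (n - 1) → K,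
        (∑ i : Fin n, c i • (sigmaTwist q)^[(i : ℕ)] M) ∈
          Submodule.span K (Set.range fun j : Fin (n - 1) => contractionD q n (z j) M)) ↔
      (∃ z lam : Fin (n - 1) → K,
        ∀ i : Fin n, c i = ∑ j : Fin (n - 1), lam j * z j ^ q ^ (i : ℕ)) := by
    refine exists_congr fun z => ?_
    rw [Submodule.mem_span_range_iff_exists_fun K]
    refine exists_congr fun lam => ?_
    have hDexp : ∀ w : K, contractionD q n w M
        = ∑ i : Fin n, w ^ q ^ (i : ℕ) • (sigmaTwist q)^[(i : ℕ)] M := fun w =>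
      (Fin.sum_univ_eq_sum_range (fun j => w ^ q ^ j • (sigmaTwist q)^[j] M) n).symm
    have hkeyEq : ∑ j : Fin (n - 1), lam j • contractionD q n (z j) M
        = ∑ i : Fin n, (∑ j : Fin (n - 1), lam j * z j ^ q ^ (i : ℕ))
            • (sigmaTwist q)^[(i : ℕ)] M := by
      calc ∑ j : Fin (n - 1), lam j • contractionD q n (z j) M
          = ∑ j : Fin (n - 1), ∑ i : Fin n,
              (lam j * z j ^ q ^ (i : ℕ)) • (sigmaTwist q)^[(i : ℕ)] M := by
            refine Finset.sum_congr rfl fun j _ => ?_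
            rw [hDexp (z j), Finset.smul_sum]
            exact Finset.sum_congr rfl fun i _ => (smul_smul _ _ _)
        _ = ∑ i : Fin n, (∑ j : Fin (n - 1), lam j * z j ^ q ^ (i : ℕ))
              • (sigmaTwist q)^[(i : ℕ)] M := by
            rw [Finset.sum_comm]
            exact Finset.sum_congr rfl fun i _ => (Finset.sum_smul).symm
    rw [hkeyEq]
    constructor
    · intro hEq i
      have h0 : ∑ i : Fin n, ((∑ j : Fin (n - 1), lam j * z j ^ q ^ (i : ℕ)) - c i)
          • (sigmaTwist q)^[(i : ℕ)] M = 0 := by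
        rw [Finset.sum_congr rfl fun i (_ : i ∈ Finset.univ) => sub_smul _ _ _,
          Finset.sum_sub_distrib, hEq, sub_self]
      have h1 := Fintype.linearIndependent_iff.mp hind _ h0 i
      exact (sub_eq_zero.mp h1).symm
    · intro hci
      exact Finset.sum_congr rfl fun i _ => by rw [← hci i]
  rw [hmat]
  exact (not_iff_comm.mp hkey).symm
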